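/- arXiv:0709.4319 — 2 statements merged into one kernel-verified Lean document; each statement's English description precedes it below -/
import Mathlib

section
/- Let λ ∈ ℂ with λ ∉ ℝ and |λ| ≠ 1, λ ≠ 0 (i.e. the linear conformal map B(z) = λz is the composition of a nontrivial rotation, of angle different from 0 and π, with a homothety of ratio |λ| ≠ 1). Let U ⊆ ℂ be an open neighborhood of 0 and let g : U → ℂ be a C¹ diffeomorphism onto its image such that g(λz) = λ·g(z) for all z in some neighborhood of 0 on which both sides are defined. Then g coincides with a conformal linear map near 0: there exist μ ∈ ℂ, μ ≠ 0, and a neighborhood V of 0 such that g(z) = μz for all z ∈ V. -/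
/-!
STATEMENT 10: A local C¹ diffeomorphism of `ℂ ≃ ℝ²` fixing a neighborhood of `0` which commutes
near `0` with the linear conformal map `z ↦ λ z` (with `λ` non-real, `|λ| ≠ 1`, `λ ≠ 0`)
coincides with a conformal linear map `z ↦ μ z` near `0`.
-/

theorem statement10 (lam : ℂ) (him : lam.im ≠ 0) (habs : ‖lam‖ ≠ 1) (hne : lam ≠ 0)
    (U : Set ℂ) (hU : IsOpen U) (h0U : (0 : ℂ) ∈ U)
    (g : ℂ → ℂ)
    (hgC1 : ContDiffOn ℝ 1 g U)
    (hginj : Set.InjOn g U)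
    (hgdiff : ∀ z ∈ U, ∃ D : ℂ ≃L[ℝ] ℂ, HasFDerivAt g (D : ℂ →L[ℝ] ℂ) z)
    (hcomm : ∃ W ∈ nhds (0 : ℂ), ∀ z ∈ W, z ∈ U ∧ lam * z ∈ U ∧ g (lam * z) = lam * g z) :
    ∃ μ : ℂ, μ ≠ 0 ∧ ∃ V ∈ nhds (0 : ℂ), ∀ z ∈ V, g z = μ * z := by
  obtain ⟨W, hW, hWcomm⟩ := hcomm
  have h0W : (0 : ℂ) ∈ W := mem_of_mem_nhds hW
  have hlam1 : lam ≠ 1 := by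
    intro h; rw [h] at him; simp at him
  have hg0 : g 0 = 0 := by
    have h := (hWcomm 0 h0W).2.2
    rw [mul_zero] at h
    have h2 : (1 - lam) * g 0 = 0 := by linear_combination h
    rcases mul_eq_zero.mp h2 with h3 | h3
    · exact absurd (by linear_combination -h3) hlam1
    · exact h3
  obtain ⟨D, hD⟩ := hgdiff 0 h0U
  -- multiplication by lam as a real-linear continuous map
  set Lmul : ℂ →L[ℝ] ℂ := lam • ContinuousLinearMap.id ℝ ℂ with hLmuldef
  have hLmul : ∀ z : ℂ, Lmul z = lam * z := by
    intro z; simp [hLmuldef, smul_eq_mul]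
  have hLmul0 : Lmul 0 = 0 := by simp [hLmul]
  have h1 : HasFDerivAt (fun z => g (lam * z)) (((D : ℂ →L[ℝ] ℂ)).comp Lmul) 0 := by
    have hDat : HasFDerivAt g (D : ℂ →L[ℝ] ℂ) (Lmul 0) := by rw [hLmul0]; exact hD
    have := hDat.comp 0 Lmul.hasFDerivAt
    simpa [Function.comp_def, hLmul] using this
  have h2 : HasFDerivAt (fun z => lam * g z) (lam • (D : ℂ →L[ℝ] ℂ)) 0 := by
    simpa [Pi.smul_def, smul_eq_mul] using hD.const_smul lam
  have heq : (fun z => lam * g z) =ᶠ[nhds 0] (fun z => g (lam * z)) := by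
    filter_upwards [hW] with z hz
    exact ((hWcomm z hz).2.2).symm
  have hDD : ((D : ℂ →L[ℝ] ℂ)).comp Lmul = lam • (D : ℂ →L[ℝ] ℂ) :=
    (h1.congr_of_eventuallyEq heq).unique h2
  have hcommD : ∀ w : ℂ, (D : ℂ →L[ℝ] ℂ) (lam * w) = lam * (D : ℂ →L[ℝ] ℂ) w := by
    intro w
    have := DFunLike.congr_fun hDD w
    simpa [hLmul, smul_eq_mul] using this
  set μ : ℂ := (D : ℂ →L[ℝ] ℂ) 1 with hμdef
  have hμ0 : μ ≠ 0 := by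
    intro h
    have : (1 : ℂ) = 0 := D.injective (by simpa [hμdef] using h)
    simp at this
  have hsmul : ∀ (a : ℝ) (x : ℂ), (D : ℂ →L[ℝ] ℂ) ((a : ℂ) * x) = (a : ℂ) * (D : ℂ →L[ℝ] ℂ) x := by
    intro a x
    have := (D : ℂ →L[ℝ] ℂ).map_smul a x
    simpa [Complex.real_smul] using this
  have hsmulc : ∀ a : ℝ, (D : ℂ →L[ℝ] ℂ) (a : ℂ) = (a : ℂ) * μ := by
    intro a
    have := hsmul a 1
    simpa [hμdef] using this
  have him' : (lam.im : ℂ) ≠ 0 := Complex.ofReal_ne_zero.mpr him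
  have hDI : (D : ℂ →L[ℝ] ℂ) Complex.I = Complex.I * μ := by
    have h1' : (D : ℂ →L[ℝ] ℂ) lam = lam * μ := by
      simpa [hμdef] using hcommD 1
    have h2' : (D : ℂ →L[ℝ] ℂ) lam
        = (lam.re : ℂ) * μ + (lam.im : ℂ) * (D : ℂ →L[ℝ] ℂ) Complex.I := by
      conv_lhs => rw [← Complex.re_add_im lam]
      rw [map_add, hsmul, hsmulc]
    have h3' : (lam.im : ℂ) * (D : ℂ →L[ℝ] ℂ) Complex.I = (lam.im : ℂ) * (Complex.I * μ) := by
      have hlam : lam = (lam.re : ℂ) + (lam.im : ℂ) * Complex.I := (Complex.re_add_im lam).symm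
      linear_combination h1' - h2' + μ * hlam
    exact mul_left_cancel₀ him' h3'
  have hDlin : ∀ z : ℂ, (D : ℂ →L[ℝ] ℂ) z = μ * z := by
    intro z
    conv_lhs => rw [← Complex.re_add_im z]
    rw [map_add, hsmul, hsmulc, hDI]
    conv_rhs => rw [← Complex.re_add_im z]
    ring
  -- little-o estimate
  have hlo : ∀ ε > (0 : ℝ), ∃ δ > (0 : ℝ), ∀ w : ℂ, ‖w‖ < δ → ‖g w - μ * w‖ ≤ ε * ‖w‖ := by
    have h := hasFDerivAt_iff_isLittleO_nhds_zero.mp hD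
    intro ε hε
    have h2' := (Asymptotics.isLittleO_iff.mp h) hε
    rw [Metric.eventually_nhds_iff] at h2'
    obtain ⟨δ, hδ, hball⟩ := h2'
    refine ⟨δ, hδ, fun w hw => ?_⟩
    have := hball (show dist w 0 < δ by simpa [dist_zero_right] using hw)
    simpa [hg0, hDlin] using this
  obtain ⟨r, hr0, hrball⟩ := Metric.mem_nhds_iff.mp hW
  have key : ∀ c : ℂ, c ≠ 0 → ‖c‖ < 1 →
      (∀ z ∈ Metric.ball (0 : ℂ) r, g (c * z) = c * g z) →
      ∀ z ∈ Metric.ball (0 : ℂ) r, g z = μ * z := by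
    intro c hc0 hc1 H
    have hiter : ∀ n : ℕ, ∀ z ∈ Metric.ball (0 : ℂ) r, g (c ^ n * z) = c ^ n * g z := by
      intro n
      induction n with
      | zero => intro z hz; simp
      | succ n ih =>
        intro z hz
        have hz' : c ^ n * z ∈ Metric.ball (0 : ℂ) r := by
          rw [Metric.mem_ball, dist_zero_right] at hz ⊢
          calc ‖c ^ n * z‖ = ‖c‖ ^ n * ‖z‖ := by rw [norm_mul, norm_pow]
            _ ≤ 1 * ‖z‖ := by
                apply mul_le_mul_of_nonneg_right _ (norm_nonneg z)
                exact pow_le_one₀ (norm_nonneg c) hc1.le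
            _ = ‖z‖ := one_mul _
            _ < r := hz
        calc g (c ^ (n + 1) * z) = g (c * (c ^ n * z)) := by ring_nf
          _ = c * g (c ^ n * z) := H _ hz'
          _ = c * (c ^ n * g z) := by rw [ih z hz]
          _ = c ^ (n + 1) * g z := by ring
    intro z hz
    rcases eq_or_ne z 0 with rfl | hz0
    · simp [hg0]
    have hznorm : (0 : ℝ) < ‖z‖ := norm_pos_iff.mpr hz0
    have hnorm : ∀ ε > (0 : ℝ), ‖g z - μ * z‖ ≤ ε * ‖z‖ := by
      intro ε hε
      obtain ⟨δ, hδ, hle⟩ := hlo ε hε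
      obtain ⟨n, hn⟩ : ∃ n : ℕ, ‖c‖ ^ n < δ / ‖z‖ :=
        exists_pow_lt_of_lt_one (div_pos hδ hznorm) hc1
      have hw : ‖c ^ n * z‖ < δ := by
        rw [norm_mul, norm_pow]
        rw [lt_div_iff₀ hznorm] at hn
        exact hn
      have h1' := hle _ hw
      rw [hiter n z hz] at h1'
      have hmain : ‖c‖ ^ n * ‖g z - μ * z‖ ≤ ‖c‖ ^ n * (ε * ‖z‖) := by
        calc ‖c‖ ^ n * ‖g z - μ * z‖ = ‖c ^ n * (g z - μ * z)‖ := by rw [norm_mul, norm_pow]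
          _ = ‖c ^ n * g z - μ * (c ^ n * z)‖ := by ring_nf
          _ ≤ ε * ‖c ^ n * z‖ := h1'
          _ = ‖c‖ ^ n * (ε * ‖z‖) := by rw [norm_mul, norm_pow]; ring
      exact le_of_mul_le_mul_left hmain (pow_pos (norm_pos_iff.mpr hc0) n)
    have hfin : ‖g z - μ * z‖ ≤ 0 := by
      refine le_of_forall_pos_le_add fun ε hε => ?_
      have h := hnorm (ε / ‖z‖) (div_pos hε hznorm)
      rw [div_mul_cancel₀ _ hznorm.ne'] at h
      linarith
    have hzero : g z - μ * z = 0 := norm_eq_zero.mp (le_antisymm hfin (norm_nonneg _))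
    exact sub_eq_zero.mp hzero
  refine ⟨μ, hμ0, Metric.ball 0 r, Metric.ball_mem_nhds 0 hr0, ?_⟩
  rcases habs.lt_or_gt with hlt | hlt
  · exact key lam hne (by simpa using hlt)
      (fun z hz => (hWcomm z (hrball hz)).2.2)
  · have hgt : (1 : ℝ) < ‖lam‖ := by simpa using hlt
    have hc1 : ‖lam⁻¹‖ < 1 := by
      rw [norm_inv]
      exact inv_lt_one_of_one_lt₀ hgt
    apply key lam⁻¹ (inv_ne_zero hne) hc1
    intro z hz
    have hw : lam⁻¹ * z ∈ Metric.ball (0 : ℂ) r := by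
      rw [Metric.mem_ball, dist_zero_right] at hz ⊢
      calc ‖lam⁻¹ * z‖ = ‖lam⁻¹‖ * ‖z‖ := norm_mul _ _
        _ ≤ 1 * ‖z‖ := mul_le_mul_of_nonneg_right hc1.le (norm_nonneg z)
        _ = ‖z‖ := one_mul _
        _ < r := hz
    have hcz := (hWcomm _ (hrball hw)).2.2
    rw [show lam * (lam⁻¹ * z) = z by field_simp] at hcz
    rw [hcz, ← mul_assoc, inv_mul_cancel₀ hne, one_mul]
end

section
/- Let d ≥ 2, let A be an invertible linear endomorphism of ℝ^d, and let i ∈ {1, …, d−1}. Suppose that A has a complex eigenvalue of rank (i, i+1): there is an A-invariant direct sum decomposition ℝ^d = E′ ⊕ F′ ⊕ G′ with dim E′ = i−1, dim F′ = 2, dim G′ = d−i−1, such that the restriction of A to F′ has a pair of non-real complex conjugate eigenvalues of modulus λ, every complex eigenvalue of the restriction of A to E′ has modulus strictly less than λ, and every complex eigenvalue of the restriction of A to G′ has modulus strictly greater than λ. Then for every A-invariant direct sum decomposition ℝ^d = E ⊕ F such that every complex eigenvalue of the restriction of A to E has modulus strictly smaller than every complex eigenvalue of the restriction of A to F, one has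 dim E ≠ i. -/
/-!
STATEMENT 14: If an invertible linear endomorphism `A` of `ℝ^d` has a complex eigenvalue of
rank `(i, i+1)` (witnessed by an invariant splitting `ℝ^d = E' ⊕ F' ⊕ G'`), then for every
`A`-invariant splitting `ℝ^d = E ⊕ F` in which all complex eigenvalue moduli on `E` are
strictly smaller than those on `F`, one has `dim E ≠ i`.

The complex eigenvalues (with multiplicity) of an endomorphism of a finite-dimensional real
vector space are the roots in `ℂ` of its characteristic polynomial, i.e. the multiset
`(LinearMap.charpoly T).aroots ℂ`.
-/

open Polynomial Module


-- pair charpoly lemma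
lemma st14_charpoly_pair {V : Type*} [AddCommGroup V] [Module ℝ V] [FiniteDimensional ℝ V]
    (f : V →ₗ[ℝ] V) {E F : Submodule ℝ V} (h : IsCompl E F)
    (hE : ∀ x ∈ E, f x ∈ E) (hF : ∀ x ∈ F, f x ∈ F) :
    f.charpoly = (f.restrict hE).charpoly * (f.restrict hF).charpoly := by
  set e := Submodule.prodEquivOfIsCompl E F h with he
  have key : f = e.conj ((f.restrict hE).prodMap (f.restrict hF)) := by
    apply LinearMap.ext
    intro v
    obtain ⟨p, rfl⟩ := e.surjective v
    rw [LinearEquiv.conj_apply_apply, LinearEquiv.symm_apply_apply]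
    show f (e p) = e _
    rw [Submodule.coe_prodEquivOfIsCompl', Submodule.coe_prodEquivOfIsCompl']
    simp [LinearMap.restrict_coe_apply]
  conv_lhs => rw [key]
  rw [LinearEquiv.charpoly_conj, LinearMap.charpoly_prodMap]

-- nested restrict
lemma st14_charpoly_nested {V : Type*} [AddCommGroup V] [Module ℝ V] [FiniteDimensional ℝ V]
    (f : V →ₗ[ℝ] V) {E W : Submodule ℝ V} (hEW : E ≤ W)
    (hW : ∀ x ∈ W, f x ∈ W) (hE : ∀ x ∈ E, f x ∈ E)
    (hE'' : ∀ x ∈ E.comap W.subtype, (f.restrict hW) x ∈ E.comap W.subtype) :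
    ((f.restrict hW).restrict hE'').charpoly = (f.restrict hE).charpoly := by
  set ψ := Submodule.comapSubtypeEquivOfLe hEW
  have key : f.restrict hE = ψ.conj ((f.restrict hW).restrict hE'') := by
    apply LinearMap.ext
    intro v
    obtain ⟨p, rfl⟩ := ψ.surjective v
    rw [LinearEquiv.conj_apply_apply, LinearEquiv.symm_apply_apply]
    apply Subtype.ext
    simp [ψ, LinearMap.restrict_coe_apply]
  conv_rhs => rw [key]
  rw [LinearEquiv.charpoly_conj]

-- card of aroots
lemma st14_card_aroots {V : Type*} [AddCommGroup V] [Module ℝ V] [FiniteDimensional ℝ V]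
    (f : V →ₗ[ℝ] V) : Multiset.card (f.charpoly.aroots ℂ) = finrank ℝ V := by
  rw [aroots_def]
  rw [IsAlgClosed.card_roots_eq_natDegree, Polynomial.natDegree_map]
  exact f.charpoly_natDegree

-- conj root
lemma st14_conj_root (p : Polynomial ℝ) {z : ℂ} (hz : z ∈ p.aroots ℂ) :
    (starRingEnd ℂ) z ∈ p.aroots ℂ := by
  rw [Polynomial.mem_aroots] at hz ⊢
  refine ⟨hz.1, ?_⟩
  have h0 : (starRingEnd ℂ) z = Complex.conjAe z := rfl
  rw [h0, Polynomial.aeval_algHom_apply, hz.2, map_zero]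

theorem statement14 (d : ℕ) (hd : 2 ≤ d)
    (A : (Fin d → ℝ) →ₗ[ℝ] (Fin d → ℝ)) (hA : Function.Bijective A)
    (i : ℕ) (hi1 : 1 ≤ i) (hi2 : i ≤ d - 1)
    (E' F' G' : Submodule ℝ (Fin d → ℝ))
    (hE'inv : ∀ x ∈ E', A x ∈ E') (hF'inv : ∀ x ∈ F', A x ∈ F')
    (hG'inv : ∀ x ∈ G', A x ∈ G')
    (hdimE' : Module.finrank ℝ E' = i - 1) (hdimF' : Module.finrank ℝ F' = 2)
    (hdimG' : Module.finrank ℝ G' = d - i - 1)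
    (hindep1 : E' ⊓ F' = ⊥) (hindep2 : (E' ⊔ F') ⊓ G' = ⊥) (hspan : E' ⊔ F' ⊔ G' = ⊤)
    (lam : ℝ)
    (hF'eig : ∃ z : ℂ, z.im ≠ 0 ∧ ‖z‖ = lam ∧
      z ∈ (LinearMap.charpoly (A.restrict hF'inv)).aroots ℂ)
    (hE'eig : ∀ z ∈ (LinearMap.charpoly (A.restrict hE'inv)).aroots ℂ, ‖z‖ < lam)
    (hG'eig : ∀ z ∈ (LinearMap.charpoly (A.restrict hG'inv)).aroots ℂ, lam < ‖z‖) :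
    ∀ (E F : Submodule ℝ (Fin d → ℝ))
      (hEinv : ∀ x ∈ E, A x ∈ E) (hFinv : ∀ x ∈ F, A x ∈ F),
      E ⊓ F = ⊥ → E ⊔ F = ⊤ →
      (∀ zE ∈ (LinearMap.charpoly (A.restrict hEinv)).aroots ℂ,
        ∀ zF ∈ (LinearMap.charpoly (A.restrict hFinv)).aroots ℂ,
          ‖zE‖ < ‖zF‖) →
      Module.finrank ℝ E ≠ i := by
  intro E F hEinv hFinv hEFbot hEFtop hlt hEi
  have hid : i < d := by omega
  -- complementarity
  have hcomplEF : IsCompl E F := ⟨disjoint_iff.mpr hEFbot, codisjoint_iff.mpr hEFtop⟩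
  have hWinv : ∀ x ∈ E' ⊔ F', A x ∈ E' ⊔ F' := by
    intro x hx
    rw [Submodule.mem_sup] at hx ⊢
    obtain ⟨y, hy, z, hz, rfl⟩ := hx
    exact ⟨A y, hE'inv y hy, A z, hF'inv z hz, (map_add A y z).symm⟩
  have hcomplWG : IsCompl (E' ⊔ F') G' := ⟨disjoint_iff.mpr hindep2, codisjoint_iff.mpr hspan⟩
  have hE''inv : ∀ x ∈ E'.comap (E' ⊔ F').subtype,
      (A.restrict hWinv) x ∈ E'.comap (E' ⊔ F').subtype := by
    intro x hx
    simp only [Submodule.mem_comap, Submodule.coe_subtype] at hx ⊢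
    rw [LinearMap.restrict_coe_apply]
    exact hE'inv _ hx
  have hF''inv : ∀ x ∈ F'.comap (E' ⊔ F').subtype,
      (A.restrict hWinv) x ∈ F'.comap (E' ⊔ F').subtype := by
    intro x hx
    simp only [Submodule.mem_comap, Submodule.coe_subtype] at hx ⊢
    rw [LinearMap.restrict_coe_apply]
    exact hF'inv _ hx
  have hcomplE''F'' : IsCompl (E'.comap (E' ⊔ F').subtype) (F'.comap (E' ⊔ F').subtype) := by
    constructor
    · rw [disjoint_iff, ← Submodule.comap_inf, hindep1, Submodule.comap_bot,
        Submodule.ker_subtype]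
    · rw [codisjoint_iff]
      apply Submodule.map_injective_of_injective (Submodule.injective_subtype (E' ⊔ F'))
      rw [Submodule.map_sup, Submodule.map_comap_eq, Submodule.map_comap_eq,
        Submodule.range_subtype, Submodule.map_top, Submodule.range_subtype,
        inf_eq_right.mpr le_sup_left, inf_eq_right.mpr le_sup_right]
  -- characteristic polynomial decompositions
  have hchar1 : A.charpoly = (A.restrict hEinv).charpoly * (A.restrict hFinv).charpoly :=
    st14_charpoly_pair A hcomplEF hEinv hFinv
  have hchar2 : A.charpoly = (A.restrict hE'inv).charpoly * (A.restrict hF'inv).charpoly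
      * (A.restrict hG'inv).charpoly := by
    rw [st14_charpoly_pair A hcomplWG hWinv hG'inv,
      st14_charpoly_pair (A.restrict hWinv) hcomplE''F'' hE''inv hF''inv,
      st14_charpoly_nested A le_sup_left hWinv hE'inv hE''inv,
      st14_charpoly_nested A le_sup_right hWinv hF'inv hF''inv]
  set RE := (A.restrict hEinv).charpoly.aroots ℂ with hRE
  set RF := (A.restrict hFinv).charpoly.aroots ℂ with hRFdef
  set RE' := (A.restrict hE'inv).charpoly.aroots ℂ with hRE'def
  set RF' := (A.restrict hF'inv).charpoly.aroots ℂ with hRF'def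
  set RG' := (A.restrict hG'inv).charpoly.aroots ℂ with hRG'def
  have hne : ∀ {V : Type} [inst : AddCommGroup V] [inst2 : Module ℝ V]
      [inst3 : FiniteDimensional ℝ V] (f : V →ₗ[ℝ] V), f.charpoly ≠ 0 :=
    fun f => (LinearMap.charpoly_monic f).ne_zero
  have hS1 : A.charpoly.aroots ℂ = RE + RF := by
    rw [hchar1, Polynomial.aroots_mul (mul_ne_zero (hne _) (hne _))]
  have hS2 : A.charpoly.aroots ℂ = RE' + RF' + RG' := by
    rw [hchar2, Polynomial.aroots_mul (mul_ne_zero (mul_ne_zero (hne _) (hne _)) (hne _)),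
      Polynomial.aroots_mul (mul_ne_zero (hne _) (hne _))]
  -- cards
  have hcRE : Multiset.card RE = i := by rw [hRE, st14_card_aroots, hEi]
  have hcRF : Multiset.card RF = d - i := by
    have hsum := Submodule.finrank_add_eq_of_isCompl hcomplEF
    rw [Module.finrank_fin_fun] at hsum
    rw [hRFdef, st14_card_aroots]
    omega
  -- the two conjugate roots on F'
  obtain ⟨z, hzim, hzabs, hzmem⟩ := hF'eig
  have hzbar : (starRingEnd ℂ) z ∈ RF' := st14_conj_root _ hzmem
  have hzne : z ≠ (starRingEnd ℂ) z := by
    intro h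
    exact hzim (Complex.conj_eq_iff_im.mp h.symm)
  have hcRF' : Multiset.card RF' = 2 := by rw [hRF'def, st14_card_aroots, hdimF']
  have hRF' : RF' = {z, (starRingEnd ℂ) z} := by
    obtain ⟨T, hT⟩ := Multiset.exists_cons_of_mem hzmem
    have hmT : (starRingEnd ℂ) z ∈ T := by
      have h := hzbar
      rw [hT, Multiset.mem_cons] at h
      exact h.resolve_left (Ne.symm hzne)
    obtain ⟨T', hT'⟩ := Multiset.exists_cons_of_mem hmT
    have hc : Multiset.card T' = 0 := by
      have h := hcRF'
      rw [hT, hT'] at h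
      simpa using h
    rw [hT, hT', Multiset.card_eq_zero.mp hc]
    rfl
  -- counting on moduli
  have hkey1 : (Multiset.map (norm : ℂ → ℝ) (A.charpoly.aroots ℂ)).countP (fun x => x < lam)
      = i - 1 := by
    rw [hS2]
    simp only [Multiset.map_add, Multiset.countP_add]
    have h1 : (RE'.map (norm : ℂ → ℝ)).countP (fun x => x < lam) = i - 1 := by
      rw [Multiset.countP_eq_card.mpr, Multiset.card_map, hRE'def, st14_card_aroots, hdimE']
      intro a ha
      obtain ⟨w, hw, rfl⟩ := Multiset.mem_map.mp ha
      exact hE'eig w hw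
    have h2 : (RF'.map (norm : ℂ → ℝ)).countP (fun x => x < lam) = 0 := by
      rw [Multiset.countP_eq_zero]
      intro a ha
      obtain ⟨w, hw, rfl⟩ := Multiset.mem_map.mp ha
      rw [hRF'] at hw
      rcases Multiset.mem_cons.mp hw with h | h
      · subst h; rw [hzabs]; exact lt_irrefl _
      · rw [Multiset.mem_singleton.mp h, Complex.norm_conj, hzabs]; exact lt_irrefl _
    have h3 : (RG'.map (norm : ℂ → ℝ)).countP (fun x => x < lam) = 0 := by
      rw [Multiset.countP_eq_zero]
      intro a ha
      obtain ⟨w, hw, rfl⟩ := Multiset.mem_map.mp ha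
      exact asymm (hG'eig w hw)
    rw [h1, h2, h3]
    omega
  have hkey2 : (Multiset.map (norm : ℂ → ℝ) (A.charpoly.aroots ℂ)).countP (fun x => lam < x)
      = d - i - 1 := by
    rw [hS2]
    simp only [Multiset.map_add, Multiset.countP_add]
    have h1 : (RE'.map (norm : ℂ → ℝ)).countP (fun x => lam < x) = 0 := by
      rw [Multiset.countP_eq_zero]
      intro a ha
      obtain ⟨w, hw, rfl⟩ := Multiset.mem_map.mp ha
      exact asymm (hE'eig w hw)
    have h2 : (RF'.map (norm : ℂ → ℝ)).countP (fun x => lam < x) = 0 := by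
      rw [Multiset.countP_eq_zero]
      intro a ha
      obtain ⟨w, hw, rfl⟩ := Multiset.mem_map.mp ha
      rw [hRF'] at hw
      rcases Multiset.mem_cons.mp hw with h | h
      · subst h; rw [hzabs]; exact lt_irrefl _
      · rw [Multiset.mem_singleton.mp h, Complex.norm_conj, hzabs]; exact lt_irrefl _
    have h3 : (RG'.map (norm : ℂ → ℝ)).countP (fun x => lam < x)
        = Multiset.card (RG'.map (norm : ℂ → ℝ)) := by
      rw [Multiset.countP_eq_card]
      intro a ha
      obtain ⟨w, hw, rfl⟩ := Multiset.mem_map.mp ha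
      exact hG'eig w hw
    rw [h1, h2, h3, Multiset.card_map, hRG'def, st14_card_aroots, hdimG']
    omega
  have hkey3 : 2 ≤ Multiset.count lam (Multiset.map (norm : ℂ → ℝ) (A.charpoly.aroots ℂ)) := by
    rw [hS2]
    simp only [Multiset.map_add, Multiset.count_add]
    have h2 : Multiset.count lam (RF'.map (norm : ℂ → ℝ)) = 2 := by
      rw [hRF']
      simp [hzabs, Complex.norm_conj]
    omega
  have hsplit : Multiset.map (norm : ℂ → ℝ) (A.charpoly.aroots ℂ)
      = RE.map (norm : ℂ → ℝ) + RF.map (norm : ℂ → ℝ) := by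
    rw [hS1, Multiset.map_add]
  have hmemor : lam ∈ RE.map (norm : ℂ → ℝ) ∨ lam ∈ RF.map (norm : ℂ → ℝ) := by
    by_contra hcon
    push_neg at hcon
    have h1 := Multiset.count_eq_zero.mpr hcon.1
    have h2 := Multiset.count_eq_zero.mpr hcon.2
    rw [hsplit, Multiset.count_add, h1, h2] at hkey3
    omega
  rcases hmemor with hm | hm
  · -- lam is a modulus on E : every modulus on F exceeds lam, too many large roots
    obtain ⟨zE, hzE, hzEabs⟩ := Multiset.mem_map.mp hm
    have hall : (RF.map (norm : ℂ → ℝ)).countP (fun x => lam < x)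
        = Multiset.card (RF.map (norm : ℂ → ℝ)) := by
      rw [Multiset.countP_eq_card]
      intro a ha
      obtain ⟨w, hw, rfl⟩ := Multiset.mem_map.mp ha
      calc lam = ‖zE‖ := hzEabs.symm
        _ < ‖w‖ := hlt zE hzE w hw
    have hge : d - i ≤ (Multiset.map (norm : ℂ → ℝ) (A.charpoly.aroots ℂ)).countP
        (fun x => lam < x) := by
      rw [hsplit, Multiset.countP_add, hall, Multiset.card_map, hcRF]
      omega
    omega
  · -- lam is a modulus on F : every modulus on E is below lam, too many small roots
    obtain ⟨zF, hzF, hzFabs⟩ := Multiset.mem_map.mp hm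
    have hall : (RE.map (norm : ℂ → ℝ)).countP (fun x => x < lam)
        = Multiset.card (RE.map (norm : ℂ → ℝ)) := by
      rw [Multiset.countP_eq_card]
      intro a ha
      obtain ⟨w, hw, rfl⟩ := Multiset.mem_map.mp ha
      calc ‖w‖ < ‖zF‖ := hlt w hw zF hzF
        _ = lam := hzFabs
    have hge : i ≤ (Multiset.map (norm : ℂ → ℝ) (A.charpoly.aroots ℂ)).countP
        (fun x => x < lam) := by
      rw [hsplit, Multiset.countP_add, hall, Multiset.card_map, hcRE]
      omega
    omega
end
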